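/- Lyapunov equation for a Hurwitz matrix: Let A be a real q×q Hurwitz matrix and Q a real symmetric q×q matrix. Then the Lyapunov equation Aᵀ P + P A + Q = 0 has a unique solution P, it is symmetric, and it is given by P = ∫₀^∞ exp(Aᵀ t) Q exp(A t) dt. Moreover, if Q is positive definite then P is positive definite. -/

import Mathlib

open Matrix

/-- Symmetric part of a real square matrix: `(A + Aᵀ)/2`. -/
noncomputable def symPart {n : ℕ} (A : Matrix (Fin n) (Fin n) ℝ) : Matrix (Fin n) (Fin n) ℝ :=
  (1 / 2 : ℝ) • (A + Aᵀ)

theorem symPart_isHermitian {n : ℕ} (A : Matrix (Fin n) (Fin n) ℝ) :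
    (symPart A).IsHermitian := by
  ext i j
  simp [symPart, Matrix.IsHermitian, Matrix.conjTranspose_apply, mul_comm, add_comm]
  ring

/-- Logarithmic 2-norm of a real square matrix: the largest eigenvalue of its
symmetric part `(A + Aᵀ)/2`. -/
noncomputable def mu2 {n : ℕ} (A : Matrix (Fin n) (Fin n) ℝ) : ℝ :=
  ⨆ i, (symPart_isHermitian A).eigenvalues i

/-- Spectral norm of a real matrix: the operator norm induced by the Euclidean norm. -/
noncomputable def specNorm {m n : ℕ} (A : Matrix (Fin m) (Fin n) ℝ) : ℝ :=
  ‖LinearMap.toContinuousLinearMap (Matrix.toEuclideanLin A)‖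

/-- A real square matrix is Hurwitz if every complex eigenvalue (i.e. every element of the
complex spectrum of its complexification) has strictly negative real part. -/
def IsHurwitz {n : ℕ} (A : Matrix (Fin n) (Fin n) ℝ) : Prop :=
  ∀ μ ∈ spectrum ℂ (A.map (Complex.ofReal ·)), μ.re < 0

open NormedSpace Filter Set Topology MeasureTheory

namespace LyapAux

variable {q : ℕ}

theorem tendsto_exp_smul_mulVec (B : Matrix (Fin q) (Fin q) ℂ)
    (hB : ∀ μ ∈ spectrum ℂ B, μ.re < 0) (v : Fin q → ℂ) :
    Tendsto (fun t : ℝ => exp (t • B) *ᵥ v) atTop (𝓝 0) := by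
  letI : SeminormedRing (Matrix (Fin q) (Fin q) ℂ) := Matrix.linftyOpSemiNormedRing
  letI : NormedRing (Matrix (Fin q) (Fin q) ℂ) := Matrix.linftyOpNormedRing
  letI : NormedAlgebra ℂ (Matrix (Fin q) (Fin q) ℂ) := Matrix.linftyOpNormedAlgebra
  let S : Submodule ℂ (Fin q → ℂ) :=
    { carrier := {w | Tendsto (fun t : ℝ => exp (t • B) *ᵥ w) atTop (𝓝 0)}
      add_mem' := by
        intro a b ha hb
        simpa [Matrix.mulVec_add] using ha.add hb
      zero_mem' := by simpa [Matrix.mulVec_zero] using tendsto_const_nhds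
      smul_mem' := by
        intro c a ha
        simpa [Matrix.mulVec_smul] using ha.const_smul c }
  suffices h : ∀ μ : ℂ, Module.End.maxGenEigenspace (Matrix.toLinAlgEquiv' B) μ ≤ S by
    have htop := Module.End.iSup_maxGenEigenspace_eq_top (Matrix.toLinAlgEquiv' B)
    have hle : (⊤ : Submodule ℂ (Fin q → ℂ)) ≤ S := htop ▸ iSup_le h
    exact hle (Submodule.mem_top)
  intro μ w hw
  obtain ⟨k, hk⟩ := (Module.End.mem_maxGenEigenspace _ _ _).1 hw
  by_cases hw0 : w = 0
  · subst hw0; exact S.zero_mem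
  -- μ is in the spectrum of B
  have hμ : μ ∈ spectrum ℂ B := by
    have hne : Module.End.genEigenspace (Matrix.toLinAlgEquiv' B) μ k ≠ ⊥ := by
      rw [Submodule.ne_bot_iff]
      exact ⟨w, by rwa [Module.End.mem_genEigenspace_nat, LinearMap.mem_ker], hw0⟩
    have hgen : Module.End.HasGenEigenvalue (Matrix.toLinAlgEquiv' B) μ k := hne
    have heig := Module.End.hasEigenvalue_of_hasGenEigenvalue hgen
    have := Module.End.hasEigenvalue_iff_mem_spectrum.1 heig
    rwa [AlgEquiv.spectrum_eq (Matrix.toLinAlgEquiv' (R := ℂ) (n := Fin q)) B] at this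
  have hre : μ.re < 0 := hB μ hμ
  -- translate the generalized eigenvector condition to matrices
  set N : Matrix (Fin q) (Fin q) ℂ := B - μ • 1 with hN
  have hNk : N ^ k *ᵥ w = 0 := by
    have h2 : Matrix.toLinAlgEquiv' (N ^ k)
        = (Matrix.toLinAlgEquiv' B - μ • 1) ^ k := by
      rw [map_pow, map_sub, _root_.map_smul, _root_.map_one]
    rw [← Matrix.toLinAlgEquiv'_apply, h2]
    exact hk
  -- split the exponential
  have hsplit : ∀ t : ℝ, exp (t • B) = Complex.exp (t • μ) • exp (t • N) := by
    intro t
    have h1 : t • B = (t • μ) • (1 : Matrix (Fin q) (Fin q) ℂ) + t • N := by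
      rw [smul_assoc, ← smul_add, hN, add_sub_cancel]
    rw [h1, exp_add_of_commute _ _ ((Commute.one_left (t • N)).smul_left (t • μ)),
      ← Algebra.algebraMap_eq_smul_one,
      show exp (algebraMap ℂ (Matrix (Fin q) (Fin q) ℂ) (t • μ)) = algebraMap ℂ _ (exp (t • μ)) from
        (algebraMap_exp_comm _).symm, ← Complex.exp_eq_exp_ℂ,
      Algebra.algebraMap_eq_smul_one, smul_mul_assoc, one_mul]
  -- the vector picture: a finite sum
  let ψ : Matrix (Fin q) (Fin q) ℂ →ₗ[ℂ] (Fin q → ℂ) :=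
    { toFun := fun M => M *ᵥ w
      map_add' := fun M M' => Matrix.add_mulVec M M' w
      map_smul' := fun c M => Matrix.smul_mulVec c M w }
  let Ψ : Matrix (Fin q) (Fin q) ℂ →L[ℂ] (Fin q → ℂ) := LinearMap.toContinuousLinearMap ψ
  have hΨ : ∀ M, Ψ M = M *ᵥ w := fun _ => rfl
  have hfin : ∀ t : ℝ, exp (t • N) *ᵥ w
      = ∑ n ∈ Finset.range k, (((n.factorial : ℂ))⁻¹ * (t : ℂ) ^ n) • (N ^ n *ᵥ w) := by
    intro t
    have hsummable := expSeries_summable' (𝕂 := ℂ) (t • N)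
    have h1 : exp (t • N) *ᵥ w = ∑' n : ℕ, Ψ (((n.factorial : ℂ))⁻¹ • (t • N) ^ n) := by
      rw [← hΨ, exp_eq_tsum ℂ, ContinuousLinearMap.map_tsum Ψ hsummable]
    have hterm : ∀ n : ℕ, Ψ (((n.factorial : ℂ))⁻¹ • (t • N) ^ n)
        = (((n.factorial : ℂ))⁻¹ * (t : ℂ) ^ n) • (N ^ n *ᵥ w) := by
      intro n
      rw [hΨ, smul_pow]
      rw [Matrix.smul_mulVec, Matrix.smul_mulVec]
      rw [← algebraMap_smul ℂ (t ^ n) (N ^ n *ᵥ w), smul_smul]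
      congr 1
      rw [Complex.coe_algebraMap]
      push_cast
      ring
    rw [h1]
    rw [tsum_eq_sum (s := Finset.range k)]
    · exact Finset.sum_congr rfl fun n _ => hterm n
    · intro n hn
      rw [Finset.mem_range, not_lt] at hn
      rw [hterm n]
      have : N ^ n *ᵥ w = 0 := by
        rw [← Nat.sub_add_cancel hn, pow_add, ← Matrix.mulVec_mulVec, hNk, Matrix.mulVec_zero]
      rw [this, smul_zero]
  have hfun : ∀ t : ℝ, exp (t • B) *ᵥ w
      = ∑ n ∈ Finset.range k,
          (Complex.exp (t • μ) * ((n.factorial : ℂ)⁻¹ * (t : ℂ) ^ n)) • (N ^ n *ᵥ w) := by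
    intro t
    rw [hsplit t, Matrix.smul_mulVec, hfin t, Finset.smul_sum]
    exact Finset.sum_congr rfl fun n _ => (smul_smul _ _ _)
  have hlim : Tendsto (fun t : ℝ => ∑ n ∈ Finset.range k,
      (Complex.exp (t • μ) * ((n.factorial : ℂ)⁻¹ * (t : ℂ) ^ n)) • (N ^ n *ᵥ w))
      atTop (𝓝 0) := by
    have h0 : (0 : Fin q → ℂ) = ∑ n ∈ Finset.range k, ((0 : ℂ) • (N ^ n *ᵥ w)) := by simp
    rw [h0]
    refine tendsto_finset_sum _ fun n _ => Tendsto.smul_const ?_ _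
    rw [tendsto_zero_iff_norm_tendsto_zero]
    have hb : (0 : ℝ) < -μ.re := by linarith
    have base := tendsto_rpow_mul_exp_neg_mul_atTop_nhds_zero (n : ℝ) (-μ.re) hb
    have base' := base.const_mul ((n.factorial : ℝ))⁻¹
    rw [mul_zero] at base'
    refine base'.congr' ?_
    filter_upwards [eventually_ge_atTop (0 : ℝ)] with t ht
    rw [norm_mul, norm_mul, Complex.norm_exp]
    have h1 : (t • μ).re = μ.re * t := by
      simp [Complex.real_smul, Complex.mul_re, mul_comm]
    have h2 : ‖((n.factorial : ℂ))⁻¹‖ = ((n.factorial : ℝ))⁻¹ := by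
      rw [norm_inv]; norm_cast
    have h3 : ‖((t : ℂ)) ^ n‖ = t ^ n := by
      rw [norm_pow, Complex.norm_real, Real.norm_eq_abs, abs_of_nonneg ht]
    rw [h1, h2, h3, Real.rpow_natCast, neg_neg]
    ring
  exact hlim.congr fun t => (hfun t).symm


/-- Entrywise exponential decay of the matrix exponential of a Hurwitz matrix. -/
theorem entry_decay (A : Matrix (Fin q) (Fin q) ℝ) (hA : IsHurwitz A) :
    ∃ C δ : ℝ, 0 < C ∧ 0 < δ ∧ ∀ t : ℝ, 0 ≤ t → ∀ i j,
      |exp (t • A) i j| ≤ C * Real.exp (-δ * t) := by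
  classical
  letI : SeminormedRing (Matrix (Fin q) (Fin q) ℝ) := Matrix.linftyOpSemiNormedRing
  letI : NormedRing (Matrix (Fin q) (Fin q) ℝ) := Matrix.linftyOpNormedRing
  letI : NormedAlgebra ℝ (Matrix (Fin q) (Fin q) ℝ) := Matrix.linftyOpNormedAlgebra
  letI : NormedAlgebra ℚ (Matrix (Fin q) (Fin q) ℝ) := Matrix.linftyOpNormedAlgebra
  letI : SeminormedRing (Matrix (Fin q) (Fin q) ℂ) := Matrix.linftyOpSemiNormedRing
  letI : NormedRing (Matrix (Fin q) (Fin q) ℂ) := Matrix.linftyOpNormedRing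
  letI : NormedAlgebra ℝ (Matrix (Fin q) (Fin q) ℂ) := Matrix.linftyOpNormedAlgebra
  set B : Matrix (Fin q) (Fin q) ℂ := A.map (Complex.ofReal ·) with hB
  have hmap : ∀ t : ℝ, (exp (t • A)).map (Complex.ofReal ·) = exp (t • B) := by
    intro t
    have hcont : Continuous (Complex.ofRealHom.mapMatrix (m := Fin q)) :=
      Continuous.matrix_map continuous_id Complex.continuous_ofReal
    have h1 := map_exp (Complex.ofRealHom.mapMatrix (m := Fin q)) hcont (t • A)
    have h2 : (Complex.ofRealHom.mapMatrix (m := Fin q)) (t • A) = t • B := by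
      ext i j
      simp only [RingHom.mapMatrix_apply, Matrix.map_apply, Matrix.smul_apply, smul_eq_mul,
        Complex.ofReal_mul, hB, Complex.real_smul, Complex.ofRealHom_eq_coe]
    have h3 : (Complex.ofRealHom.mapMatrix (m := Fin q)) (exp (t • A))
        = (exp (t • A)).map (Complex.ofReal ·) := rfl
    rw [← h3]; exact h1.trans (congrArg _ h2)
  have hentry_eq : ∀ t : ℝ, ∀ i j : Fin q,
      exp (t • A) i j = (exp (t • B) i j).re := by
    intro t i j
    have := congrFun (congrFun (hmap t) i) j
    rw [← this]
    rfl
  -- entrywise convergence to 0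
  have centry : ∀ i j : Fin q, Tendsto (fun t : ℝ => |exp (t • A) i j|) atTop (𝓝 0) := by
    intro i j
    have hv := tendsto_exp_smul_mulVec B hA (Pi.single j 1)
    have hc := (tendsto_pi_nhds.1 hv) i
    have hc' : Tendsto (fun t : ℝ => exp (t • B) i j) atTop (𝓝 0) := by
      refine hc.congr fun t => ?_
      simp [Matrix.mulVec_single]
    have hnc : Tendsto (fun t : ℝ => ‖exp (t • B) i j‖) atTop (𝓝 0) := by
      simpa using hc'.norm
    refine squeeze_zero (fun t => abs_nonneg _) (fun t => ?_) hnc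
    rw [hentry_eq t i j]
    exact (Complex.abs_re_le_norm _)
  -- norm bound by sum of entries
  have hnorm_le : ∀ M : Matrix (Fin q) (Fin q) ℝ, ‖M‖ ≤ ∑ i, ∑ j, |M i j| := by
    intro M
    rw [Matrix.linfty_opNorm_def]
    have h1 : ((Finset.univ : Finset (Fin q)).sup fun i => ∑ j, ‖M i j‖₊)
        ≤ ∑ i, ∑ j, ‖M i j‖₊ := by
      refine Finset.sup_le fun i _ => ?_
      exact Finset.single_le_sum (f := fun i => ∑ j, ‖M i j‖₊) (fun i _ => zero_le)
        (Finset.mem_univ i)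
    calc (((Finset.univ : Finset (Fin q)).sup fun i => ∑ j, ‖M i j‖₊ : NNReal) : ℝ)
        ≤ ((∑ i, ∑ j, ‖M i j‖₊ : NNReal) : ℝ) := by exact_mod_cast h1
      _ = ∑ i, ∑ j, |M i j| := by
          push_cast
          simp [Real.norm_eq_abs]
  have hentry_le : ∀ (M : Matrix (Fin q) (Fin q) ℝ) i j, |M i j| ≤ ‖M‖ := by
    intro M i j
    rw [Matrix.linfty_opNorm_def]
    have h1 : ‖M i j‖₊ ≤ (Finset.univ : Finset (Fin q)).sup fun i => ∑ j, ‖M i j‖₊ :=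
      le_trans (Finset.single_le_sum (f := fun j' => ‖M i j'‖₊) (fun j _ => zero_le)
          (Finset.mem_univ j))
        (Finset.le_sup (f := fun i => ∑ j, ‖M i j‖₊) (Finset.mem_univ i))
    exact_mod_cast h1
  -- norm convergence
  have hnorm : Tendsto (fun t : ℝ => ‖exp (t • A)‖) atTop (𝓝 0) := by
    have hsum : Tendsto (fun t : ℝ => ∑ i, ∑ j, |exp (t • A) i j|) atTop (𝓝 0) := by
      have := tendsto_finset_sum (Finset.univ : Finset (Fin q))
        (fun i _ => tendsto_finset_sum (Finset.univ : Finset (Fin q))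
          (fun j _ => centry i j))
      simpa using this
    exact squeeze_zero (fun t => norm_nonneg _) (fun t => hnorm_le _) hsum
  -- pick a time T with norm < 1/2
  obtain ⟨T, hT12, hT1⟩ : ∃ T : ℝ, ‖exp (T • A)‖ < 1/2 ∧ 1 ≤ T := by
    have h1 : ∀ᶠ t : ℝ in atTop, ‖exp (t • A)‖ < 1/2 :=
      hnorm.eventually_lt_const (by norm_num)
    exact ((h1.and (eventually_ge_atTop (1:ℝ))).exists)
  have hT0 : (0:ℝ) < T := lt_of_lt_of_le one_pos hT1
  -- bound on [0, T]
  have hcontexp : Continuous (fun s : ℝ => exp (s • A)) := by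
    have h1 : Continuous (fun s : ℝ => s • A) := continuous_id.smul continuous_const
    exact (exp_continuous (𝔸 := Matrix (Fin q) (Fin q) ℝ)).comp h1
  obtain ⟨C₀, hC₀⟩ := (isCompact_Icc (a := (0:ℝ)) (b := T)).exists_bound_of_continuousOn
    hcontexp.continuousOn
  set C1 : ℝ := max C₀ 1 with hC1
  have hC1pos : (0:ℝ) < C1 := lt_of_lt_of_le one_pos (le_max_right _ _)
  have key : ∀ k : ℕ, ∀ s ∈ Icc (0:ℝ) T,
      ‖exp (s • A) * exp (T • A) ^ k‖ ≤ C1 * (1/2) ^ k := by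
    intro k
    induction k with
    | zero =>
      intro s hs
      simp only [pow_zero, mul_one]
      exact (hC₀ s hs).trans (le_max_left _ _)
    | succ k ih =>
      intro s hs
      rw [pow_succ, ← mul_assoc]
      calc ‖exp (s • A) * exp (T • A) ^ k * exp (T • A)‖
          ≤ ‖exp (s • A) * exp (T • A) ^ k‖ * ‖exp (T • A)‖ := norm_mul_le _ _
        _ ≤ (C1 * (1/2)^k) * (1/2) := by
            exact mul_le_mul (ih s hs) hT12.le (norm_nonneg _) (by positivity)
        _ = C1 * (1/2)^(k+1) := by ring
  refine ⟨2 * C1, Real.log 2 / T, by positivity,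
    div_pos (Real.log_pos one_lt_two) hT0, ?_⟩
  intro t ht i j
  set k : ℕ := ⌊t / T⌋₊ with hk
  have hkT : (k : ℝ) * T ≤ t := by
    rw [← le_div_iff₀ hT0]
    exact Nat.floor_le (div_nonneg ht hT0.le)
  have hkT' : t < ((k : ℝ) + 1) * T := by
    rw [← div_lt_iff₀ hT0]
    exact Nat.lt_floor_add_one _
  set s : ℝ := t - (k : ℝ) * T with hs
  have hsIcc : s ∈ Icc (0:ℝ) T := ⟨by simp [hs]; linarith, by simp [hs]; nlinarith⟩
  have hdecomp : exp (t • A) = exp (s • A) * exp (T • A) ^ k := by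
    have h1 : t • A = s • A + ((k : ℝ) * T) • A := by
      rw [← add_smul]; congr 1; simp [hs]
    have h2 : ((k : ℝ) * T) • A = (k : ℕ) • (T • A) := by
      rw [← Nat.cast_smul_eq_nsmul ℝ, smul_smul]
    rw [h1, exp_add_of_commute _ _ (((Commute.refl A).smul_left s).smul_right ((k:ℝ)*T)),
      h2, Matrix.exp_nsmul]
  have hb1 : |exp (t • A) i j| ≤ C1 * (1/2)^k := by
    refine (hentry_le _ i j).trans ?_
    rw [hdecomp]; exact key k s hsIcc
  have hb2 : ((1:ℝ)/2)^k ≤ 2 * Real.exp (-(Real.log 2 / T) * t) := by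
    have hlog : (0:ℝ) < Real.log 2 := Real.log_pos one_lt_two
    have hkge : t / T - 1 ≤ (k : ℝ) := by
      have := Nat.lt_floor_add_one (t / T); linarith
    have e1 : ((1:ℝ)/2)^k = Real.exp ((k : ℝ) * (-Real.log 2)) := by
      rw [Real.exp_nat_mul, Real.exp_neg, Real.exp_log two_pos, one_div]
    rw [e1]
    have e2 : (k : ℝ) * (-Real.log 2) ≤ Real.log 2 + (-(Real.log 2 / T) * t) := by
      have h3 : Real.log 2 / T * t ≤ Real.log 2 * ((k:ℝ) + 1) := by
        rw [div_mul_eq_mul_div, div_le_iff₀ hT0]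
        nlinarith
      nlinarith
    calc Real.exp ((k:ℝ) * (-Real.log 2)) ≤ Real.exp (Real.log 2 + (-(Real.log 2 / T) * t)) :=
          Real.exp_le_exp.2 e2
      _ = 2 * Real.exp (-(Real.log 2 / T) * t) := by
          rw [Real.exp_add, Real.exp_log two_pos]
  calc |exp (t • A) i j| ≤ C1 * (1/2)^k := hb1
    _ ≤ C1 * (2 * Real.exp (-(Real.log 2 / T) * t)) :=
        mul_le_mul_of_nonneg_left hb2 hC1pos.le
    _ = 2 * C1 * Real.exp (-(Real.log 2 / T) * t) := by ring


/-- entries of `t ↦ exp(tAᵀ) P exp(tA)` are differentiable with the expected derivative. -/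
theorem hasDerivAt_entry (A P : Matrix (Fin q) (Fin q) ℝ) (t : ℝ) (i j : Fin q) :
    HasDerivAt (fun u : ℝ => (exp (u • Aᵀ) * P * exp (u • A)) i j)
      ((Aᵀ * (exp (t • Aᵀ) * P * exp (t • A))
        + (exp (t • Aᵀ) * P * exp (t • A)) * A) i j) t := by
  letI : SeminormedRing (Matrix (Fin q) (Fin q) ℝ) := Matrix.linftyOpSemiNormedRing
  letI : NormedRing (Matrix (Fin q) (Fin q) ℝ) := Matrix.linftyOpNormedRing
  letI : NormedAlgebra ℝ (Matrix (Fin q) (Fin q) ℝ) := Matrix.linftyOpNormedAlgebra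
  have h1 : HasDerivAt (fun u : ℝ => exp (u • Aᵀ)) (Aᵀ * exp (t • Aᵀ)) t :=
    hasDerivAt_exp_smul_const' (𝕂 := ℝ) Aᵀ t
  have h2 : HasDerivAt (fun u : ℝ => exp (u • A)) (exp (t • A) * A) t :=
    hasDerivAt_exp_smul_const (𝕂 := ℝ) A t
  have h3 := (h1.mul_const P).mul h2
  have hM : HasDerivAt (fun u : ℝ => exp (u • Aᵀ) * P * exp (u • A))
      (Aᵀ * (exp (t • Aᵀ) * P * exp (t • A))
        + (exp (t • Aᵀ) * P * exp (t • A)) * A) t := by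
    refine h3.congr_deriv ?_
    noncomm_ring
  let ψ : Matrix (Fin q) (Fin q) ℝ →ₗ[ℝ] ℝ :=
    { toFun := fun M => M i j
      map_add' := fun _ _ => rfl
      map_smul' := fun _ _ => rfl }
  exact ((LinearMap.toContinuousLinearMap ψ).hasFDerivAt.comp_hasDerivAt t hM)

theorem exp_comm (X : Matrix (Fin q) (Fin q) ℝ) (t : ℝ) :
    X * exp (t • X) = exp (t • X) * X := by
  letI : SeminormedRing (Matrix (Fin q) (Fin q) ℝ) := Matrix.linftyOpSemiNormedRing
  letI : NormedRing (Matrix (Fin q) (Fin q) ℝ) := Matrix.linftyOpNormedRing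
  letI : NormedAlgebra ℝ (Matrix (Fin q) (Fin q) ℝ) := Matrix.linftyOpNormedAlgebra
  exact (((Commute.refl X).smul_right t).exp_right).eq

theorem exp_zero_smul (X : Matrix (Fin q) (Fin q) ℝ) : exp ((0:ℝ) • X) = 1 := by
  rw [zero_smul, exp_zero]

theorem mulVec_exp_ne_zero (A : Matrix (Fin q) (Fin q) ℝ) (t : ℝ) {x : Fin q → ℝ}
    (hx : x ≠ 0) : exp (t • A) *ᵥ x ≠ 0 := by
  intro h
  have hinv : exp (-(t • A)) * exp (t • A) = 1 := by
    rw [← Matrix.exp_add_of_commute _ _ (Commute.neg_left (Commute.refl (t • A))),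
      neg_add_cancel, exp_zero]
  apply hx
  calc x = (exp (-(t • A)) * exp (t • A)) *ᵥ x := by rw [hinv, Matrix.one_mulVec]
    _ = exp (-(t • A)) *ᵥ (exp (t • A) *ᵥ x) := by rw [← Matrix.mulVec_mulVec]
    _ = 0 := by rw [h, Matrix.mulVec_zero]


end LyapAux

open LyapAux

/-- Lyapunov equation for a Hurwitz matrix: if `A` is Hurwitz and `Q` is
symmetric, then `AᵀP + PA + Q = 0` has a unique solution `P`; it is symmetric and is given
entrywise by `P = ∫₀^∞ exp(Aᵀt) Q exp(At) dt`; moreover, if `Q ≻ 0` then `P ≻ 0`. -/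
theorem lyapunov_equation_hurwitz {q : ℕ}
    (A Q : Matrix (Fin q) (Fin q) ℝ)
    (hA : IsHurwitz A) (hQ : Q.IsHermitian) :
    (∃! P : Matrix (Fin q) (Fin q) ℝ, Aᵀ * P + P * A + Q = 0) ∧
    (∀ P : Matrix (Fin q) (Fin q) ℝ, Aᵀ * P + P * A + Q = 0 →
      P.IsHermitian ∧
      (∀ i j, P i j =
        ∫ t in Set.Ioi (0 : ℝ),
          (NormedSpace.exp (t • Aᵀ) * Q * NormedSpace.exp (t • A)) i j) ∧
      (Q.PosDef → P.PosDef)) := by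
  classical
  obtain ⟨C, δ, hC, hδ, hdecay⟩ := entry_decay A hA
  have hdecayT : ∀ t : ℝ, 0 ≤ t → ∀ i j, |exp (t • Aᵀ) i j| ≤ C * Real.exp (-δ * t) := by
    intro t ht i j
    have htr : exp (t • Aᵀ) = (exp (t • A))ᵀ := by
      rw [← Matrix.transpose_smul, Matrix.exp_transpose]
    rw [htr]
    exact hdecay t ht j i
  -- entrywise bound for sandwiched products
  have sandwich : ∀ (P₀ : Matrix (Fin q) (Fin q) ℝ) (t : ℝ), 0 ≤ t → ∀ i j,
      |(exp (t • Aᵀ) * P₀ * exp (t • A)) i j|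
        ≤ (C * C * ∑ k, ∑ l, |P₀ k l|) * Real.exp (-(2*δ) * t) := by
    intro P₀ t ht i j
    have hexpand : (exp (t • Aᵀ) * P₀ * exp (t • A)) i j
        = ∑ l, ∑ k, exp (t • Aᵀ) i k * P₀ k l * exp (t • A) l j := by
      simp [Matrix.mul_apply, Finset.sum_mul]
    calc |(exp (t • Aᵀ) * P₀ * exp (t • A)) i j|
        ≤ ∑ l, ∑ k, |exp (t • Aᵀ) i k * P₀ k l * exp (t • A) l j| := by
          rw [hexpand]
          exact (Finset.abs_sum_le_sum_abs _ _).trans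
            (Finset.sum_le_sum fun l _ => Finset.abs_sum_le_sum_abs _ _)
      _ ≤ ∑ l, ∑ k, (C * Real.exp (-δ*t)) * |P₀ k l| * (C * Real.exp (-δ*t)) := by
          refine Finset.sum_le_sum fun l _ => Finset.sum_le_sum fun k _ => ?_
          rw [abs_mul, abs_mul]
          have hb1 := hdecayT t ht i k
          have hb2 := hdecay t ht l j
          have h1 : |exp (t • Aᵀ) i k| * |P₀ k l| ≤ (C * Real.exp (-δ*t)) * |P₀ k l| :=
            mul_le_mul_of_nonneg_right hb1 (abs_nonneg _)
          exact mul_le_mul h1 hb2 (abs_nonneg _) (by positivity)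
      _ = (C * C * ∑ k, ∑ l, |P₀ k l|) * Real.exp (-(2*δ) * t) := by
          have hexp2 : Real.exp (-δ*t) * Real.exp (-δ*t) = Real.exp (-(2*δ)*t) := by
            rw [← Real.exp_add]; ring_nf
          rw [Finset.sum_comm]
          simp only [Finset.sum_mul, Finset.mul_sum]
          refine Finset.sum_congr rfl fun k _ => Finset.sum_congr rfl fun l _ => ?_
          rw [← hexp2]; ring
  -- continuity of entries
  have hMcont : ∀ (P₀ : Matrix (Fin q) (Fin q) ℝ) (i j : Fin q),
      Continuous (fun t : ℝ => (exp (t • Aᵀ) * P₀ * exp (t • A)) i j) := by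
    intro P₀ i j
    exact continuous_iff_continuousAt.2 fun t => (hasDerivAt_entry A P₀ t i j).continuousAt
  -- integrability of entries
  have hMint : ∀ (P₀ : Matrix (Fin q) (Fin q) ℝ) (i j : Fin q),
      IntegrableOn (fun t : ℝ => (exp (t • Aᵀ) * P₀ * exp (t • A)) i j) (Ioi 0) := by
    intro P₀ i j
    refine Integrable.mono'
      (g := fun t => (C * C * ∑ k, ∑ l, |P₀ k l|) * Real.exp (-(2*δ) * t)) ?_
      (hMcont P₀ i j).aestronglyMeasurable ?_
    · exact ((exp_neg_integrableOn_Ioi 0 (by positivity : (0:ℝ) < 2*δ)).const_mul _)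
    · filter_upwards [ae_restrict_mem measurableSet_Ioi] with t ht
      rw [Real.norm_eq_abs]
      exact sandwich P₀ t (le_of_lt ht) i j
  -- entries tend to 0 at infinity
  have hMtend : ∀ (P₀ : Matrix (Fin q) (Fin q) ℝ) (i j : Fin q),
      Tendsto (fun t : ℝ => (exp (t • Aᵀ) * P₀ * exp (t • A)) i j) atTop (𝓝 0) := by
    intro P₀ i j
    have hg : Tendsto (fun t : ℝ => (C * C * ∑ k, ∑ l, |P₀ k l|) * Real.exp (-(2*δ) * t))
        atTop (𝓝 0) := by
      have h1 : Tendsto (fun t : ℝ => (2*δ) * t) atTop atTop :=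
        Tendsto.const_mul_atTop (by positivity) tendsto_id
      have h2 : Tendsto (fun t : ℝ => Real.exp (-((2*δ) * t))) atTop (𝓝 0) :=
        Real.tendsto_exp_neg_atTop_nhds_zero.comp h1
      have h3 := h2.const_mul (C * C * ∑ k, ∑ l, |P₀ k l|)
      rw [mul_zero] at h3
      refine h3.congr fun t => ?_
      rw [neg_mul]
    have habs : Tendsto (fun t : ℝ => |(exp (t • Aᵀ) * P₀ * exp (t • A)) i j|)
        atTop (𝓝 0) :=
      squeeze_zero' (Eventually.of_forall fun t => abs_nonneg _)
        ((eventually_ge_atTop 0).mono fun t ht => sandwich P₀ t ht i j) hg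
    rw [tendsto_zero_iff_norm_tendsto_zero]
    simpa [Real.norm_eq_abs] using habs
  -- any solution is given by the integral formula
  have main : ∀ P₀ : Matrix (Fin q) (Fin q) ℝ, Aᵀ * P₀ + P₀ * A + Q = 0 →
      ∀ i j, P₀ i j = ∫ t in Ioi (0:ℝ), (exp (t • Aᵀ) * Q * exp (t • A)) i j := by
    intro P₀ hP₀ i j
    have hQeq : Aᵀ * P₀ + P₀ * A = -Q := eq_neg_of_add_eq_zero_left hP₀
    have hgderiv : ∀ t : ℝ, HasDerivAt (fun u : ℝ => (exp (u • Aᵀ) * P₀ * exp (u • A)) i j)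
        (-((exp (t • Aᵀ) * Q * exp (t • A)) i j)) t := by
      intro t
      have h1 := hasDerivAt_entry A P₀ t i j
      have h2 : Aᵀ * (exp (t • Aᵀ) * P₀ * exp (t • A))
          + (exp (t • Aᵀ) * P₀ * exp (t • A)) * A
          = -(exp (t • Aᵀ) * Q * exp (t • A)) := by
        have hc1 : Aᵀ * exp (t • Aᵀ) = exp (t • Aᵀ) * Aᵀ := exp_comm Aᵀ t
        have hc2 : exp (t • A) * A = A * exp (t • A) := (exp_comm A t).symm
        calc Aᵀ * (exp (t • Aᵀ) * P₀ * exp (t • A))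
              + (exp (t • Aᵀ) * P₀ * exp (t • A)) * A
            = (Aᵀ * exp (t • Aᵀ)) * P₀ * exp (t • A)
              + exp (t • Aᵀ) * P₀ * (exp (t • A) * A) := by noncomm_ring
          _ = (exp (t • Aᵀ) * Aᵀ) * P₀ * exp (t • A)
              + exp (t • Aᵀ) * P₀ * (A * exp (t • A)) := by rw [hc1, hc2]
          _ = exp (t • Aᵀ) * (Aᵀ * P₀ + P₀ * A) * exp (t • A) := by noncomm_ring
          _ = -(exp (t • Aᵀ) * Q * exp (t • A)) := by rw [hQeq]; noncomm_ring
      rw [h2] at h1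
      simpa [Matrix.neg_apply] using h1
    have hderivInt : IntegrableOn
        (fun t : ℝ => -((exp (t • Aᵀ) * Q * exp (t • A)) i j)) (Ioi 0) :=
      (hMint Q i j).neg
    have hftc := integral_Ioi_of_hasDerivAt_of_tendsto
      ((hgderiv 0).continuousAt.continuousWithinAt)
      (fun x _ => hgderiv x) hderivInt (hMtend P₀ i j)
    rw [integral_neg] at hftc
    have h0 : (exp ((0:ℝ) • Aᵀ) * P₀ * exp ((0:ℝ) • A)) i j = P₀ i j := by
      rw [exp_zero_smul, exp_zero_smul, one_mul, Matrix.mul_one]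
    simp only [zero_sub] at hftc
    have h5 := neg_injective hftc
    exact (h5.trans h0).symm
  -- the candidate solution
  set P : Matrix (Fin q) (Fin q) ℝ :=
    Matrix.of fun i j => ∫ t in Ioi (0:ℝ), (exp (t • Aᵀ) * Q * exp (t • A)) i j with hPdef
  have hPsol : Aᵀ * P + P * A + Q = 0 := by
    ext i j
    have hduriv : ∀ t : ℝ, HasDerivAt
        (fun u : ℝ => (exp (u • Aᵀ) * Q * exp (u • A)) i j)
        ((Aᵀ * (exp (t • Aᵀ) * Q * exp (t • A))
          + (exp (t • Aᵀ) * Q * exp (t • A)) * A) i j) t :=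
      fun t => hasDerivAt_entry A Q t i j
    have heq : (fun t : ℝ => (Aᵀ * (exp (t • Aᵀ) * Q * exp (t • A))
          + (exp (t • Aᵀ) * Q * exp (t • A)) * A) i j)
        = fun t : ℝ => (∑ k, Aᵀ i k * (exp (t • Aᵀ) * Q * exp (t • A)) k j)
          + (∑ k, (exp (t • Aᵀ) * Q * exp (t • A)) i k * A k j) := by
      funext t
      simp [Matrix.add_apply, Matrix.mul_apply]
    have hintD : IntegrableOn (fun t : ℝ => (Aᵀ * (exp (t • Aᵀ) * Q * exp (t • A))
        + (exp (t • Aᵀ) * Q * exp (t • A)) * A) i j) (Ioi 0) := by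
      rw [heq]
      refine Integrable.add ?_ ?_
      · exact integrable_finset_sum _ (fun k _ => (hMint Q k j).const_mul _)
      · exact integrable_finset_sum _ (fun k _ => (hMint Q i k).mul_const _)
    have hftc := integral_Ioi_of_hasDerivAt_of_tendsto
      ((hduriv 0).continuousAt.continuousWithinAt)
      (fun x _ => hduriv x) hintD (hMtend Q i j)
    have h0 : (exp ((0:ℝ) • Aᵀ) * Q * exp ((0:ℝ) • A)) i j = Q i j := by
      rw [exp_zero_smul, exp_zero_smul, one_mul, Matrix.mul_one]
    -- compute the matrix entries of Aᵀ*P and P*A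
    have hAP : (Aᵀ * P) i j
        = ∫ t in Ioi (0:ℝ), ∑ k, Aᵀ i k * (exp (t • Aᵀ) * Q * exp (t • A)) k j := by
      calc (Aᵀ * P) i j
          = ∑ k, Aᵀ i k * ∫ t in Ioi (0:ℝ), (exp (t • Aᵀ) * Q * exp (t • A)) k j := by
            rw [Matrix.mul_apply]
            rfl
        _ = ∑ k, ∫ t in Ioi (0:ℝ), Aᵀ i k * (exp (t • Aᵀ) * Q * exp (t • A)) k j :=
            Finset.sum_congr rfl fun k _ => (integral_const_mul _ _).symm
        _ = ∫ t in Ioi (0:ℝ), ∑ k, Aᵀ i k * (exp (t • Aᵀ) * Q * exp (t • A)) k j :=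
            (integral_finset_sum _ (fun k _ => (hMint Q k j).const_mul _)).symm
    have hPA : (P * A) i j
        = ∫ t in Ioi (0:ℝ), ∑ k, (exp (t • Aᵀ) * Q * exp (t • A)) i k * A k j := by
      calc (P * A) i j
          = ∑ k, (∫ t in Ioi (0:ℝ), (exp (t • Aᵀ) * Q * exp (t • A)) i k) * A k j := by
            rw [Matrix.mul_apply]
            rfl
        _ = ∑ k, ∫ t in Ioi (0:ℝ), (exp (t • Aᵀ) * Q * exp (t • A)) i k * A k j :=
            Finset.sum_congr rfl fun k _ => (integral_mul_const _ _).symm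
        _ = ∫ t in Ioi (0:ℝ), ∑ k, (exp (t • Aᵀ) * Q * exp (t • A)) i k * A k j :=
            (integral_finset_sum _ (fun k _ => (hMint Q i k).mul_const _)).symm
    have hsum : (Aᵀ * P) i j + (P * A) i j = ∫ t in Ioi (0:ℝ),
        (Aᵀ * (exp (t • Aᵀ) * Q * exp (t • A))
          + (exp (t • Aᵀ) * Q * exp (t • A)) * A) i j := by
      rw [hAP, hPA, ← integral_add
        (integrable_finset_sum _ (fun k _ => (hMint Q k j).const_mul _))
        (integrable_finset_sum _ (fun k _ => (hMint Q i k).mul_const _))]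
      refine integral_congr_ae (Eventually.of_forall fun t => ?_)
      simp [Matrix.add_apply, Matrix.mul_apply]
    have hfinal : (Aᵀ * P) i j + (P * A) i j = - Q i j := by
      rw [hsum, hftc]
      simp only [zero_sub]
      rw [h0]
    simp only [Matrix.add_apply, Matrix.zero_apply]
    rw [hfinal]
    ring
  -- symmetry of Q as a plain transpose
  have hQT : Qᵀ = Q := by
    ext i j
    calc Qᵀ i j = star (Q j i) := (star_trivial _).symm
      _ = Qᴴ i j := rfl
      _ = Q i j := by rw [hQ]
  refine ⟨⟨P, hPsol, fun y hy => ?_⟩, ?_⟩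
  · ext i j
    rw [main y hy i j]
    rfl
  · intro P₀ hP₀
    have hform := main P₀ hP₀
    -- transpose is also a solution
    have hsolT : Aᵀ * P₀ᵀ + P₀ᵀ * A + Q = 0 := by
      have h1 := congrArg Matrix.transpose hP₀
      simp only [Matrix.transpose_add, Matrix.transpose_mul, Matrix.transpose_transpose,
        Matrix.transpose_zero, hQT] at h1
      rw [← h1]
      abel
    have hPT : P₀ᵀ = P₀ := by
      ext i j
      rw [main _ hsolT i j]
      exact (main P₀ hP₀ i j).symm
    have hHerm : P₀.IsHermitian := by
      show P₀ᴴ = P₀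
      ext i j
      calc P₀ᴴ i j = star (P₀ j i) := rfl
        _ = P₀ j i := star_trivial _
        _ = P₀ᵀ i j := rfl
        _ = P₀ i j := by rw [hPT]
    refine ⟨hHerm, hform, ?_⟩
    -- positive definiteness
    intro hQpd
    refine Matrix.PosDef.of_dotProduct_mulVec_pos hHerm fun x hx => ?_
    have hsx : star x = x := by
      funext i
      exact star_trivial _
    rw [hsx]
    -- the function in the quadratic form
    have hfeq : ∀ t : ℝ, x ⬝ᵥ ((exp (t • Aᵀ) * Q * exp (t • A)) *ᵥ x)
        = ∑ i, ∑ j, x i * ((exp (t • Aᵀ) * Q * exp (t • A)) i j * x j) := by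
      intro t
      rw [dotProduct]
      refine Finset.sum_congr rfl fun i _ => ?_
      rw [Matrix.mulVec, dotProduct, Finset.mul_sum]
    have hint1 : ∀ (i j : Fin q), IntegrableOn
        (fun t : ℝ => x i * ((exp (t • Aᵀ) * Q * exp (t • A)) i j * x j)) (Ioi 0) :=
      fun i j => ((hMint Q i j).mul_const _).const_mul _
    have hquad : x ⬝ᵥ (P₀ *ᵥ x) = ∫ t in Ioi (0:ℝ),
        x ⬝ᵥ ((exp (t • Aᵀ) * Q * exp (t • A)) *ᵥ x) := by
      calc x ⬝ᵥ (P₀ *ᵥ x) = ∑ i, ∑ j, x i * (P₀ i j * x j) := by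
            rw [dotProduct]
            refine Finset.sum_congr rfl fun i _ => ?_
            rw [Matrix.mulVec, dotProduct, Finset.mul_sum]
        _ = ∑ i, ∑ j, ∫ t in Ioi (0:ℝ),
              x i * ((exp (t • Aᵀ) * Q * exp (t • A)) i j * x j) := by
            refine Finset.sum_congr rfl fun i _ => Finset.sum_congr rfl fun j _ => ?_
            rw [hform i j, ← integral_mul_const, ← integral_const_mul]
        _ = ∑ i, ∫ t in Ioi (0:ℝ), ∑ j,
              x i * ((exp (t • Aᵀ) * Q * exp (t • A)) i j * x j) := by
            refine Finset.sum_congr rfl fun i _ => ?_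
            exact (integral_finset_sum _ (fun j _ => hint1 i j)).symm
        _ = ∫ t in Ioi (0:ℝ), ∑ i, ∑ j,
              x i * ((exp (t • Aᵀ) * Q * exp (t • A)) i j * x j) :=
            (integral_finset_sum _
              (fun i _ => integrable_finset_sum _ (fun j _ => hint1 i j))).symm
        _ = ∫ t in Ioi (0:ℝ), x ⬝ᵥ ((exp (t • Aᵀ) * Q * exp (t • A)) *ᵥ x) := by
            refine integral_congr_ae (Eventually.of_forall fun t => ?_)
            exact (hfeq t).symm
    -- the integrand is the quadratic form of Q at exp(tA)x
    have hyform : ∀ t : ℝ, x ⬝ᵥ ((exp (t • Aᵀ) * Q * exp (t • A)) *ᵥ x)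
        = (exp (t • A) *ᵥ x) ⬝ᵥ (Q *ᵥ (exp (t • A) *ᵥ x)) := by
      intro t
      have htr : exp (t • Aᵀ) = (exp (t • A))ᵀ := by
        rw [← Matrix.transpose_smul, Matrix.exp_transpose]
      rw [htr, ← Matrix.mulVec_mulVec, ← Matrix.mulVec_mulVec,
        Matrix.dotProduct_mulVec, Matrix.vecMul_transpose]
    have hpos : ∀ t : ℝ, 0 < x ⬝ᵥ ((exp (t • Aᵀ) * Q * exp (t • A)) *ᵥ x) := by
      intro t
      rw [hyform t]
      have hy := mulVec_exp_ne_zero A t hx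
      have := hQpd.dotProduct_mulVec_pos hy
      rwa [show star (exp (t • A) *ᵥ x) = exp (t • A) *ᵥ x from funext fun _ => star_trivial _] at this
    have hintf : IntegrableOn
        (fun t : ℝ => x ⬝ᵥ ((exp (t • Aᵀ) * Q * exp (t • A)) *ᵥ x)) (Ioi 0) := by
      have h1 : IntegrableOn (fun t : ℝ => ∑ i, ∑ j,
          x i * ((exp (t • Aᵀ) * Q * exp (t • A)) i j * x j)) (Ioi 0) :=
        integrable_finset_sum _
          (fun i _ => integrable_finset_sum _ (fun j _ => hint1 i j))
      exact h1.congr (Eventually.of_forall fun t => (hfeq t).symm)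
    have hcontf : Continuous
        (fun t : ℝ => x ⬝ᵥ ((exp (t • Aᵀ) * Q * exp (t • A)) *ᵥ x)) := by
      have h1 : Continuous (fun t : ℝ => ∑ i, ∑ j,
          x i * ((exp (t • Aᵀ) * Q * exp (t • A)) i j * x j)) := by
        refine continuous_finset_sum _ fun i _ => continuous_finset_sum _ fun j _ => ?_
        exact (continuous_const.mul ((hMcont Q i j).mul continuous_const))
      have hx2 : (fun t : ℝ => x ⬝ᵥ ((exp (t • Aᵀ) * Q * exp (t • A)) *ᵥ x))
          = fun t : ℝ => ∑ i, ∑ j,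
              x i * ((exp (t • Aᵀ) * Q * exp (t • A)) i j * x j) := funext hfeq
      rw [hx2]
      exact h1
    rw [hquad]
    have h1 : ∫ t in Ioc (0:ℝ) 1, x ⬝ᵥ ((exp (t • Aᵀ) * Q * exp (t • A)) *ᵥ x)
        ≤ ∫ t in Ioi (0:ℝ), x ⬝ᵥ ((exp (t • Aᵀ) * Q * exp (t • A)) *ᵥ x) := by
      refine setIntegral_mono_set hintf
        (Eventually.of_forall fun t => (hpos t).le) (Ioc_subset_Ioi_self).eventuallyLE
    have h2 : 0 < ∫ t in Ioc (0:ℝ) 1, x ⬝ᵥ ((exp (t • Aᵀ) * Q * exp (t • A)) *ᵥ x) := by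
      rw [← intervalIntegral.integral_of_le zero_le_one]
      exact intervalIntegral.intervalIntegral_pos_of_pos_on
        (hcontf.intervalIntegrable 0 1) (fun s _ => hpos s) one_pos
    linarith
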